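/- Let x₁,…,x_k be positive integers with x₁+⋯+x_k = r ≤ n. Then in any permutation c₁,c₂,…,c_n of [n] there exist k pairwise disjoint intervals of consecutive positions, of lengths x₁,…,x_k respectively, such that the union of the sets of entries appearing in these intervals contains {1,2,…,k}. -/

import Mathlib

namespace DICAux

def Rs (X : ℕ → ℕ) (k i : ℕ) : ℕ := ∑ j ∈ Finset.Ico i k, X j

def eF (n k : ℕ) (X Q : ℕ → ℕ) : ℕ → ℕ
  | 0 => 0
  | (i+1) => max (eF n k X Q i) (min (Q i) (n - Rs X k i)) + X i

def tF (n k : ℕ) (X Q : ℕ → ℕ) (i : ℕ) : ℕ :=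
  max (eF n k X Q i) (min (Q i) (n - Rs X k i))

lemma eF_succ (n k : ℕ) (X Q : ℕ → ℕ) (i : ℕ) :
    eF n k X Q (i+1) = tF n k X Q i + X i := rfl

lemma Rs_succ (X : ℕ → ℕ) {k i : ℕ} (h : i < k) :
    Rs X k i = X i + Rs X k (i+1) := by
  unfold Rs
  rw [Finset.sum_eq_sum_Ico_succ_bot h]

lemma Rs_anti (X : ℕ → ℕ) (k : ℕ) {i j : ℕ} (h : i ≤ j) :
    Rs X k j ≤ Rs X k i :=
  Finset.sum_le_sum_of_subset (Finset.Ico_subset_Ico h le_rfl)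

lemma eF_mono (n k : ℕ) (X Q : ℕ → ℕ) : Monotone (eF n k X Q) := by
  apply monotone_nat_of_le_succ
  intro i
  calc eF n k X Q i ≤ max (eF n k X Q i) (min (Q i) (n - Rs X k i)) := le_max_left _ _
    _ ≤ _ + X i := Nat.le_add_right _ _

lemma eF_bound (n k : ℕ) (X Q : ℕ → ℕ) (hR : Rs X k 0 ≤ n) :
    ∀ i, i ≤ k → eF n k X Q i + Rs X k i ≤ n := by
  intro i
  induction i with
  | zero => intro _; simpa [eF] using hR
  | succ i ih =>
      intro h
      have hik : i < k := h
      have hRi : Rs X k i ≤ n := le_trans (Rs_anti X k (Nat.zero_le i)) hR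
      have : eF n k X Q (i+1) + Rs X k (i+1) =
          max (eF n k X Q i) (min (Q i) (n - Rs X k i)) + Rs X k i := by
        rw [eF_succ, tF, Rs_succ X hik]; ring
      rw [this]
      rcases max_cases (eF n k X Q i) (min (Q i) (n - Rs X k i)) with ⟨he, _⟩ | ⟨he, _⟩
      · rw [he]; exact ih (le_of_lt hik)
      · rw [he]
        calc min (Q i) (n - Rs X k i) + Rs X k i ≤ (n - Rs X k i) + Rs X k i :=
              Nat.add_le_add_right (min_le_right _ _) _
          _ = n := Nat.sub_add_cancel hRi

lemma step1 (n k : ℕ) (X Q : ℕ → ℕ) (hX : ∀ j, j < k → 1 ≤ X j)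
    {i : ℕ} (hik : i < k) (h : Q i + Rs X k i ≤ n) :
    Q i < eF n k X Q (i+1) := by
  have hQ : Q i ≤ n - Rs X k i := Nat.le_sub_of_add_le h
  have : min (Q i) (n - Rs X k i) = Q i := min_eq_left hQ
  calc Q i < Q i + X i := Nat.lt_add_of_pos_right (hX i hik)
    _ ≤ max (eF n k X Q i) (min (Q i) (n - Rs X k i)) + X i := by
        rw [this]; exact Nat.add_le_add_right (le_max_right _ _) _
    _ = eF n k X Q (i+1) := rfl

lemma cover (n k : ℕ) (X Q : ℕ → ℕ) (hX : ∀ j, j < k → 1 ≤ X j)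
    (hQmono : ∀ i j, i ≤ j → j < k → Q i ≤ Q j)
    (hQlt : ∀ i, i < k → Q i < n)
    (hR : Rs X k 0 ≤ n) :
    ∀ i, i < k → ∃ j, j < k ∧ tF n k X Q j ≤ Q i ∧ Q i < tF n k X Q j + X j := by
  intro i hik
  have hk : 0 < k := by omega
  set m := k - 1 with hm
  have hmk : m < k := Nat.sub_lt hk Nat.one_pos
  have hmk1 : m + 1 = k := Nat.succ_pred_eq_of_pos hk
  have him : i ≤ m := Nat.le_pred_of_lt hik
  -- eF exceeds Q i at index m
  have hPm : Q i < eF n k X Q (m+1) := by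
    by_cases h : Q m + Rs X k m ≤ n
    · exact lt_of_le_of_lt (hQmono i m him hmk) (step1 n k X Q hX hmk h)
    · -- Q m > n - Rs m
      have hRm : Rs X k m ≤ n := le_trans (Rs_anti X k (Nat.zero_le m)) hR
      have hgt : n - Rs X k m < Q m := by
        have : n < Q m + Rs X k m := Nat.lt_of_not_le h
        omega
      have hmin : min (Q m) (n - Rs X k m) = n - Rs X k m :=
        min_eq_right (le_of_lt hgt)
      have hRk : Rs X k k = 0 := by simp [Rs]
      have hRsm : Rs X k m = X m + Rs X k (m+1) := Rs_succ X hmk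
      have : eF n k X Q (m+1) ≥ n := by
        rw [eF_succ, tF, hmin]
        have h2 : Rs X k m = X m := by rw [hRsm, hmk1, hRk, Nat.add_zero]
        rw [h2]
        calc n ≤ n - X m + X m := le_tsub_add
          _ ≤ _ := Nat.add_le_add_right (le_max_right _ _) _
      exact lt_of_lt_of_le (hQlt i hik) this
  classical
  have hex : ∃ j, Q i < eF n k X Q (j+1) := ⟨m, hPm⟩
  let j := Nat.find hex
  have hPj : Q i < eF n k X Q (j+1) := Nat.find_spec hex
  have hjm : j ≤ m := Nat.find_le hPm
  have hjk : j < k := lt_of_le_of_lt hjm hmk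
  refine ⟨j, hjk, ?_, ?_⟩
  · -- tF j ≤ Q i
    have he : eF n k X Q j ≤ Q i := by
      rcases Nat.eq_zero_or_pos j with h0 | h0
      · rw [h0]; exact Nat.zero_le _
      · have : ¬ Q i < eF n k X Q ((j-1)+1) :=
          Nat.find_min hex (Nat.sub_lt h0 Nat.one_pos)
        have hje : (j-1)+1 = j := Nat.succ_pred_eq_of_pos h0
        rw [hje] at this
        exact Nat.le_of_not_lt this
    rw [tF]
    rcases le_or_gt j i with hji | hij
    · exact max_le he (le_trans (min_le_left _ _) (hQmono j i hji hik))
    · -- i < j : show min ≤ n - Rs j ≤ eF j ≤ Q i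
      have h1 : 1 ≤ j := by omega
      have hj1 : j - 1 < k := lt_of_le_of_lt (Nat.sub_le j 1) hjk
      have hij' : i ≤ j - 1 := Nat.le_sub_one_of_lt hij
      have hje : (j-1)+1 = j := Nat.succ_pred_eq_of_pos h1
      -- Q (j-1) ≥ eF j, so step1 fails at j-1
      have hq : eF n k X Q j ≤ Q (j-1) := le_trans he (hQmono i (j-1) hij' hj1)
      have hns : ¬ Q (j-1) + Rs X k (j-1) ≤ n := by
        intro hcon
        have := step1 n k X Q hX hj1 hcon
        rw [hje] at this
        exact absurd (lt_of_le_of_lt hq this) (lt_irrefl _)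
      have hRj1 : Rs X k (j-1) ≤ n := le_trans (Rs_anti X k (Nat.zero_le _)) hR
      have hgt : n - Rs X k (j-1) < Q (j-1) := by omega
      have hmin : min (Q (j-1)) (n - Rs X k (j-1)) = n - Rs X k (j-1) :=
        min_eq_right (le_of_lt hgt)
      have hRsplit : Rs X k (j-1) = X (j-1) + Rs X k j := by
        have := Rs_succ X hj1
        rwa [hje] at this
      have hkey : n - Rs X k j ≤ eF n k X Q j := by
        conv_rhs => rw [← hje]
        rw [eF_succ, tF, hmin, hRsplit]
        calc n - Rs X k j ≤ (n - Rs X k j) - X (j-1) + X (j-1) := le_tsub_add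
          _ = n - (X (j-1) + Rs X k j) + X (j-1) := by
              rw [Nat.sub_sub, Nat.add_comm (Rs X k j)]
          _ ≤ _ := Nat.add_le_add_right (Nat.le_max_right _ _) _
      exact max_le he (le_trans (le_trans (min_le_right _ _) hkey) he)
  · rw [← eF_succ]; exact hPj

end DICAux
theorem disjoint_intervals_covering_initial_segment
    {k r n : ℕ} (x : Fin k → ℕ) (hx : ∀ i, 0 < x i)
    (hr : ∑ i : Fin k, x i = r) (hn : r ≤ n) (c : Fin n ≃ Fin n) :
    ∃ t : Fin k → ℕ,
      (∀ i : Fin k, t i + x i ≤ n) ∧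
      (∀ i j : Fin k, i ≠ j → t i + x i ≤ t j ∨ t j + x j ≤ t i) ∧
      ∀ v : Fin n, (v : ℕ) < k → ∃ (i : Fin k) (p : Fin n),
        t i ≤ (p : ℕ) ∧ (p : ℕ) < t i + x i ∧ c p = v := by
  classical
  have hkr : k ≤ r := by
    rw [← hr]
    calc k = ∑ _i : Fin k, 1 := by simp
      _ ≤ ∑ i, x i := Finset.sum_le_sum (fun i _ => hx i)
  have hkn : k ≤ n := le_trans hkr hn
  set S : Finset (Fin n) := Finset.univ.filter (fun p => (c p : ℕ) < k) with hS
  have hScard : S.card = k := by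
    have himg : S = Finset.image c.symm
        (Finset.univ.filter fun v : Fin n => (v : ℕ) < k) := by
      ext p
      simp only [hS, Finset.mem_filter, Finset.mem_univ, true_and, Finset.mem_image]
      constructor
      · intro h; exact ⟨c p, h, by simp⟩
      · rintro ⟨v, hv, rfl⟩; simpa using hv
    rw [himg, Finset.card_image_of_injective _ c.symm.injective]
    apply Finset.card_eq_of_bijective (fun i h => (⟨i, lt_of_lt_of_le h hkn⟩ : Fin n))
    · intro a ha
      simp only [Finset.mem_filter, Finset.mem_univ, true_and] at ha
      exact ⟨a.val, ha, by simp⟩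
    · intro i h
      simpa using h
    · intro i j hi hj hij
      simpa using congrArg Fin.val hij
  let oi := S.orderIsoOfFin hScard
  set Q : ℕ → ℕ := fun i => if h : i < k then ((oi ⟨i, h⟩ : Fin n) : ℕ) else 0 with hQ
  set X : ℕ → ℕ := fun j => if h : j < k then x ⟨j, h⟩ else 0 with hXd
  have hX1 : ∀ j, j < k → 1 ≤ X j := by
    intro j h
    have := hx ⟨j, h⟩
    simp only [hXd, dif_pos h]
    exact this
  have hQmono : ∀ i j, i ≤ j → j < k → Q i ≤ Q j := by
    intro i j hij hjk
    have hik : i < k := lt_of_le_of_lt hij hjk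
    simp only [hQ, dif_pos hik, dif_pos hjk]
    have h2 : oi ⟨i, hik⟩ ≤ oi ⟨j, hjk⟩ := oi.monotone hij
    exact h2
  have hQlt : ∀ i, i < k → Q i < n := by
    intro i h
    simp only [hQ, dif_pos h]
    exact (oi ⟨i, h⟩ : Fin n).isLt
  have hR0 : DICAux.Rs X k 0 = r := by
    rw [DICAux.Rs, show Finset.Ico 0 k = Finset.range k from (Finset.range_eq_Ico k).symm,
      ← Fin.sum_univ_eq_sum_range, ← hr]
    apply Finset.sum_congr rfl
    intro i _
    simp [hXd, i.isLt]
  have hR : DICAux.Rs X k 0 ≤ n := hR0 ▸ hn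
  have hxX : ∀ i : Fin k, X i.val = x i := by
    intro i; simp [hXd, i.isLt]
  refine ⟨fun i => DICAux.tF n k X Q i.val, ?_, ?_, ?_⟩
  · intro i
    rw [← hxX i, ← DICAux.eF_succ]
    calc DICAux.eF n k X Q (i.val + 1)
        ≤ DICAux.eF n k X Q (i.val + 1) + DICAux.Rs X k (i.val + 1) := Nat.le_add_right _ _
      _ ≤ n := DICAux.eF_bound n k X Q hR _ i.isLt
  · intro i j hij
    rcases lt_or_gt_of_ne hij with h | h
    · left
      rw [← hxX i, ← DICAux.eF_succ]
      calc DICAux.eF n k X Q (i.val + 1) ≤ DICAux.eF n k X Q j.val :=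
            DICAux.eF_mono n k X Q h
        _ ≤ DICAux.tF n k X Q j.val := le_max_left _ _
    · right
      rw [← hxX j, ← DICAux.eF_succ]
      calc DICAux.eF n k X Q (j.val + 1) ≤ DICAux.eF n k X Q i.val :=
            DICAux.eF_mono n k X Q h
        _ ≤ DICAux.tF n k X Q i.val := le_max_left _ _
  · intro v hv
    have hp : c.symm v ∈ S := by
      simp only [hS, Finset.mem_filter, Finset.mem_univ, true_and]
      simpa using hv
    set i0 : Fin k := (S.orderIsoOfFin hScard).symm ⟨c.symm v, hp⟩ with hi0
    have hQi0 : Q i0.val = (c.symm v : ℕ) := by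
      simp only [hQ, dif_pos i0.isLt]
      have : oi ⟨i0.val, i0.isLt⟩ = (⟨c.symm v, hp⟩ : S) := by
        rw [show (⟨i0.val, i0.isLt⟩ : Fin k) = i0 from Fin.eta i0 i0.isLt]
        exact (S.orderIsoOfFin hScard).apply_symm_apply _
      rw [this]
    obtain ⟨j, hjk, h1, h2⟩ :=
      DICAux.cover n k X Q hX1 hQmono hQlt hR i0.val i0.isLt
    refine ⟨⟨j, hjk⟩, c.symm v, ?_, ?_, by simp⟩
    · rw [← hQi0]; exact h1
    · rw [← hQi0]
      simpa [hxX ⟨j, hjk⟩] using h2
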